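/- Let B be a bialgebra. If B is both a left m-Hopf algebra and a right n-Hopf algebra, then m = n. In particular, a left m-Hopf algebra that admits a right antipode (right convolution inverse of the identity) is a Hopf algebra (m = 0). -/
import Mathlib


noncomputable section
open TensorProduct LinearMap

/-- Convolution product of linear maps from a bialgebra to an algebra. -/
def conv {k B A : Type*} [CommRing k] [Ring B] [Bialgebra k B]
    [Ring A] [Algebra k A] (f g : B →ₗ[k] A) : B →ₗ[k] A :=
  LinearMap.mul' k A ∘ₗ TensorProduct.map f g ∘ₗ Coalgebra.comul

/-- Unit of the convolution algebra: u ∘ ε. -/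
def convUnit (k B A : Type*) [CommRing k] [Ring B] [Bialgebra k B]
    [Ring A] [Algebra k A] : B →ₗ[k] A :=
  Algebra.linearMap k A ∘ₗ Coalgebra.counit

/-- n-th convolution power of the identity. -/
def convPow (k B : Type*) [CommRing k] [Ring B] [Bialgebra k B] : ℕ → (B →ₗ[k] B)
  | 0 => convUnit k B B
  | n + 1 => conv (convPow k B n) LinearMap.id

/-- The submodule (B ⊗ B)·Δ(ker ε) of B ⊗ B. -/
def oslashRel (k B : Type*) [CommRing k] [Ring B] [Bialgebra k B] :
    Submodule k (B ⊗[k] B) :=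
  Submodule.span k {z | ∃ (m : B ⊗[k] B) (b : B),
    Coalgebra.counit (R := k) b = 0 ∧ z = m * Coalgebra.comul b}

/-- B ⊘ B. -/
abbrev Oslash (k B : Type*) [CommRing k] [Ring B] [Bialgebra k B] :=
  (B ⊗[k] B) ⧸ oslashRel k B

/-- The class of x ⊗ y in B ⊘ B. -/
abbrev omk (k : Type*) {B : Type*} [CommRing k] [Ring B] [Bialgebra k B]
    (z : B ⊗[k] B) : Oslash k B := Submodule.Quotient.mk z

/-- i_B : B → B ⊘ B, b ↦ b ⊘ 1. -/
def iB (k B : Type*) [CommRing k] [Ring B] [Bialgebra k B] : B →ₗ[k] Oslash k B :=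
  (oslashRel k B).mkQ ∘ₗ (TensorProduct.mk k B B).flip 1

/-- The diagonal right coaction of B on B ⊗ B: Σ x₁ ⊗ y₁ ⊗ x₂y₂. -/
def coact (k B : Type*) [CommRing k] [Ring B] [Bialgebra k B] :
    (B ⊗[k] B) →ₗ[k] (B ⊗[k] B) ⊗[k] B :=
  (TensorProduct.map LinearMap.id (LinearMap.mul' k B)) ∘ₗ
    (TensorProduct.tensorTensorTensorComm k B B B B).toLinearMap ∘ₗ
    (TensorProduct.map Coalgebra.comul Coalgebra.comul)

/-- z ↦ z ⊗ 1. -/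
def unitR (k B : Type*) [CommRing k] [Ring B] [Bialgebra k B] :
    (B ⊗[k] B) →ₗ[k] (B ⊗[k] B) ⊗[k] B :=
  (TensorProduct.map LinearMap.id (Algebra.linearMap k B)) ∘ₗ
    (TensorProduct.rid k (B ⊗[k] B)).symm.toLinearMap

/-- B ⧄ B : the coinvariants of B ⊗ B. -/
def coinv (k B : Type*) [CommRing k] [Ring B] [Bialgebra k B] :
    Submodule k (B ⊗[k] B) :=
  LinearMap.eqLocus (coact k B) (unitR k B)

/-- Σ x ⊗ y ↦ Σ x ε(y), on all of B ⊗ B. -/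
def pB0 (k B : Type*) [CommRing k] [Ring B] [Bialgebra k B] :
    (B ⊗[k] B) →ₗ[k] B :=
  (TensorProduct.rid k B).toLinearMap ∘ₗ TensorProduct.map LinearMap.id Coalgebra.counit

/-- Σ x ⊗ y ↦ Σ ε(x) y, on all of B ⊗ B. -/
def qB0 (k B : Type*) [CommRing k] [Ring B] [Bialgebra k B] :
    (B ⊗[k] B) →ₗ[k] B :=
  (TensorProduct.lid k B).toLinearMap ∘ₗ TensorProduct.map Coalgebra.counit LinearMap.id

/-- p_B : B ⧄ B → B. -/
def pB (k B : Type*) [CommRing k] [Ring B] [Bialgebra k B] :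
    coinv k B →ₗ[k] B :=
  pB0 k B ∘ₗ (coinv k B).subtype

section AuxConv
variable {k B A : Type*} [CommRing k] [Ring B] [Bialgebra k B] [Ring A] [Algebra k A]

lemma conv_assoc (f g h : B →ₗ[k] A) : conv (conv f g) h = conv f (conv g h) := by
  have claim1 : TensorProduct.map (conv f g) h =
      (TensorProduct.map (LinearMap.mul' k A ∘ₗ TensorProduct.map f g) h) ∘ₗ
        (Coalgebra.comul (R := k) (A := B)).rTensor B := by
    ext x y
    simp [conv]
  have claim2 : TensorProduct.map f (conv g h) =
      (TensorProduct.map f (LinearMap.mul' k A ∘ₗ TensorProduct.map g h)) ∘ₗ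
        (Coalgebra.comul (R := k) (A := B)).lTensor B := by
    ext x y
    simp [conv]
  have main : ((LinearMap.mul' k A ∘ₗ
        TensorProduct.map (LinearMap.mul' k A ∘ₗ TensorProduct.map f g) h) ∘ₗ
        (TensorProduct.assoc k B B B).symm.toLinearMap) =
      LinearMap.mul' k A ∘ₗ TensorProduct.map f (LinearMap.mul' k A ∘ₗ TensorProduct.map g h) := by
    ext x y z
    simp [mul_assoc]
  show LinearMap.mul' k A ∘ₗ TensorProduct.map (conv f g) h ∘ₗ Coalgebra.comul =
    LinearMap.mul' k A ∘ₗ TensorProduct.map f (conv g h) ∘ₗ Coalgebra.comul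
  rw [claim1, claim2]
  rw [LinearMap.comp_assoc, ← Coalgebra.coassoc_symm]
  simp only [← LinearMap.comp_assoc]
  rw [main]

lemma conv_unit_right (f : B →ₗ[k] A) : conv f (convUnit k B A) = f := by
  have h1 : TensorProduct.map f (convUnit k B A) =
      (TensorProduct.map f (Algebra.linearMap k A)) ∘ₗ
        (Coalgebra.counit (R := k) (A := B)).lTensor B := by
    ext x y
    simp [convUnit]
  apply LinearMap.ext; intro b
  show LinearMap.mul' k A (TensorProduct.map f (convUnit k B A) (Coalgebra.comul b)) = f b
  rw [h1]
  simp only [LinearMap.comp_apply, Coalgebra.lTensor_counit_comul, TensorProduct.map_tmul,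
    LinearMap.mul'_apply, Algebra.linearMap_apply, map_one, mul_one]

lemma conv_unit_left (f : B →ₗ[k] A) : conv (convUnit k B A) f = f := by
  have h1 : TensorProduct.map (convUnit k B A) f =
      (TensorProduct.map (Algebra.linearMap k A) f) ∘ₗ
        (Coalgebra.counit (R := k) (A := B)).rTensor B := by
    ext x y
    simp [convUnit]
  apply LinearMap.ext; intro b
  show LinearMap.mul' k A (TensorProduct.map (convUnit k B A) f (Coalgebra.comul b)) = f b
  rw [h1]
  simp only [LinearMap.comp_apply, Coalgebra.rTensor_counit_comul, TensorProduct.map_tmul,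
    LinearMap.mul'_apply, Algebra.linearMap_apply, map_one, one_mul]

end AuxConv

section AuxPow
variable {k B : Type*} [CommRing k] [Ring B] [Bialgebra k B]

lemma convPow_succ_left (n : ℕ) :
    convPow k B (n + 1) = conv LinearMap.id (convPow k B n) := by
  induction n with
  | zero =>
    show conv (convUnit k B B) LinearMap.id = conv LinearMap.id (convUnit k B B)
    rw [conv_unit_left, conv_unit_right]
  | succ n ih =>
    show conv (convPow k B (n + 1)) LinearMap.id = _
    conv_lhs => rw [ih, conv_assoc]
    rfl

lemma conv_S_pow {S : B →ₗ[k] B} {m : ℕ}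
    (hS : conv S (convPow k B (m + 1)) = convPow k B m) (j : ℕ) :
    conv S (convPow k B (m + 1 + j)) = convPow k B (m + j) := by
  induction j with
  | zero => simpa using hS
  | succ j ih =>
    show conv S (conv (convPow k B (m + 1 + j)) LinearMap.id) = _
    rw [← conv_assoc, ih]
    rfl

lemma conv_pow_T {T : B →ₗ[k] B} {n : ℕ}
    (hT : conv (convPow k B (n + 1)) T = convPow k B n) (j : ℕ) :
    conv (convPow k B (n + 1 + j)) T = convPow k B (n + j) := by
  induction j with
  | zero => simpa using hT
  | succ j ih =>
    have e : n + 1 + (j + 1) = (n + 1 + j) + 1 := rfl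
    rw [e, convPow_succ_left (n + 1 + j), conv_assoc, ih,
      ← convPow_succ_left (n + j)]
    rfl

lemma hopf_eq {m n : ℕ}
    (hmL : ∃ S : B →ₗ[k] B, conv S (convPow k B (m + 1)) = convPow k B m)
    (hm : ∀ l, (∃ S : B →ₗ[k] B, conv S (convPow k B (l + 1)) = convPow k B l) → m ≤ l)
    (hnL : ∃ T : B →ₗ[k] B, conv (convPow k B (n + 1)) T = convPow k B n)
    (hn : ∀ l, (∃ T : B →ₗ[k] B, conv (convPow k B (l + 1)) T = convPow k B l) → n ≤ l) :
    m = n := by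
  obtain ⟨S, hS⟩ := hmL
  obtain ⟨T, hT⟩ := hnL
  rcases lt_trichotomy m n with h | h | h
  · -- m < n : derive T works at level n-1
    exfalso
    obtain ⟨j, rfl⟩ : ∃ j, n = m + j + 1 := ⟨n - m - 1, by omega⟩
    have h1 := conv_S_pow hS (j + 1)
    have e1 : m + 1 + (j + 1) = m + j + 1 + 1 := by omega
    have e2 : m + (j + 1) = m + j + 1 := by omega
    rw [e1, e2] at h1
    -- h1 : conv S (convPow (m+j+1+1)) = convPow (m+j+1)
    have key : conv (convPow k B (m + j + 1)) T = conv S (convPow k B (m + j + 1)) := by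
      conv_rhs => rw [← hT]
      rw [← conv_assoc, h1]
    have hS' := conv_S_pow hS j
    have e3 : m + 1 + j = m + j + 1 := by omega
    rw [e3] at hS'
    rw [hS'] at key
    have := hn (m + j) ⟨T, key⟩
    omega
  · exact h
  · -- n < m : derive S works at level m-1
    exfalso
    obtain ⟨j, rfl⟩ : ∃ j, m = n + j + 1 := ⟨m - n - 1, by omega⟩
    have h1 := conv_pow_T hT (j + 1)
    have e1 : n + 1 + (j + 1) = n + j + 1 + 1 := by omega
    have e2 : n + (j + 1) = n + j + 1 := by omega
    rw [e1, e2] at h1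
    have key : conv S (convPow k B (n + j + 1)) = conv (convPow k B (n + j + 1)) T := by
      conv_rhs => rw [← hS]
      rw [conv_assoc, h1]
    have hT' := conv_pow_T hT j
    have e3 : n + 1 + j = n + j + 1 := by omega
    rw [e3] at hT'
    rw [hT'] at key
    have := hm (n + j) ⟨S, key⟩
    omega

lemma convPow_one : convPow k B 1 = LinearMap.id := by
  show conv (convUnit k B B) LinearMap.id = LinearMap.id
  rw [conv_unit_left]

end AuxPow

theorem stmt1 (k B : Type*) [Field k] [Ring B] [Bialgebra k B] (m n : ℕ) :
    (((∃ S : B →ₗ[k] B, conv S (convPow k B (m + 1)) = convPow k B m) ∧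
        (∀ l, (∃ S : B →ₗ[k] B, conv S (convPow k B (l + 1)) = convPow k B l) → m ≤ l)) →
      ((∃ T : B →ₗ[k] B, conv (convPow k B (n + 1)) T = convPow k B n) ∧
        (∀ l, (∃ T : B →ₗ[k] B, conv (convPow k B (l + 1)) T = convPow k B l) → n ≤ l)) →
      m = n) ∧
    (((∃ S : B →ₗ[k] B, conv S (convPow k B (m + 1)) = convPow k B m) ∧
        (∀ l, (∃ S : B →ₗ[k] B, conv S (convPow k B (l + 1)) = convPow k B l) → m ≤ l)) →
      (∃ T : B →ₗ[k] B, conv LinearMap.id T = convUnit k B B) →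
      m = 0 ∧ ∃ S : B →ₗ[k] B, conv S LinearMap.id = convUnit k B B ∧
        conv LinearMap.id S = convUnit k B B) := by
  constructor
  · rintro ⟨hmL, hm⟩ ⟨hnL, hn⟩
    exact hopf_eq hmL hm hnL hn
  · rintro ⟨hmL, hm⟩ ⟨T, hT⟩
    have hT0 : conv (convPow k B (0 + 1)) T = convPow k B 0 := by
      show conv (convPow k B 1) T = convUnit k B B
      rw [convPow_one]
      exact hT
    have hm0 : m = 0 := hopf_eq hmL hm ⟨T, hT0⟩ (fun l _ => Nat.zero_le l)
    subst hm0
    obtain ⟨S, hS⟩ := hmL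
    have hS' : conv S LinearMap.id = convUnit k B B := by
      have h1 : convPow k B (0 + 1) = LinearMap.id := convPow_one
      rw [h1] at hS
      exact hS
    have hST : S = T := by
      calc S = conv S (convUnit k B B) := (conv_unit_right S).symm
        _ = conv S (conv LinearMap.id T) := by rw [hT]
        _ = conv (conv S LinearMap.id) T := (conv_assoc _ _ _).symm
        _ = conv (convUnit k B B) T := by rw [hS']
        _ = T := conv_unit_left T
    exact ⟨rfl, S, hS', by rw [hST]; exact hT⟩
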